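/- Let (r_j)_{j≥0} be the Markov chain on {0,1,…,m} with r_{j+1} = r_j ± Δ(r_j) with probability 1/2 each, where Δ(x) = ⌈min(x, m−x)/3⌉, and Δ(0)=Δ(m)=0 so 0 and m are absorbing. If r_0 = 1, then the chain is a bounded martingale, it is absorbed at 0 or m almost surely, and the probability of absorption at m equals 1/m. -/

import Mathlib

open MeasureTheory ProbabilityTheory
open scoped ENNReal

/-- The depinking chain of the chameleon process (Section 3): `r_{j+1} = r_j ± Δ(r_j)`
with probability `1/2` each, where `Δ(x) = ⌈min(x, m−x)/3⌉` (so `Δ(0) = Δ(m) = 0` and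
`0`, `m` are absorbing). Driven by i.i.d. fair coins `B j` and started at `r_0 = 1`,
the chain stays in `{0,…,m}`, is a (bounded) martingale with respect to its natural
filtration, is absorbed at `0` or `m` almost surely, and absorbs at `m` with
probability exactly `1/m`. -/
theorem stmt_9 {Ω : Type*} [MeasureSpace Ω] [IsProbabilityMeasure (ℙ : Measure Ω)]
    (m : ℕ) (hm : 1 ≤ m)
    (B : ℕ → Ω → Bool) (hBmeas : ∀ j, Measurable (B j))
    (hBindep : iIndepFun B ℙ)
    (hBfair : ∀ j, ℙ {ω | B j ω = true} = 1 / 2)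
    (Δ : ℕ → ℕ) (hΔ : ∀ x, Δ x = (min x (m - x) + 2) / 3)
    (r : ℕ → Ω → ℕ) (hr0 : ∀ ω, r 0 ω = 1)
    (hrec : ∀ j ω, r (j + 1) ω =
      if B j ω then r j ω + Δ (r j ω) else r j ω - Δ (r j ω))
    (hrmeas : ∀ j, StronglyMeasurable fun ω => ((r j ω : ℝ))) :
    (∀ j ω, r j ω ≤ m) ∧
    Martingale (fun j ω => (r j ω : ℝ))
      (Filtration.natural (fun j ω => ((r j ω : ℝ))) hrmeas) ℙ ∧
    ℙ {ω | ∃ J, ∀ j, J ≤ j → r j ω = r J ω ∧ (r J ω = 0 ∨ r J ω = m)} = 1 ∧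
    ℙ {ω | ∃ J, r J ω = m} = 1 / (m : ℝ≥0∞) := by
  classical
  -- Δ facts
  have hΔ0 : Δ 0 = 0 := by rw [hΔ]; omega
  have hΔm : Δ m = 0 := by rw [hΔ]; omega
  have hΔself : ∀ x, x ≤ m → Δ x ≤ x := fun x hx => by rw [hΔ]; omega
  have hΔub : ∀ x, x ≤ m → x + Δ x ≤ m := fun x hx => by rw [hΔ]; omega
  have hΔpos : ∀ x, 0 < x → x < m → 1 ≤ Δ x := fun x h1 h2 => by rw [hΔ]; omega
  -- the chain stays in {0,…,m}
  have hrle : ∀ j ω, r j ω ≤ m := by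
    intro j
    induction j with
    | zero => intro ω; rw [hr0]; exact hm
    | succ n ih =>
      intro ω
      rw [hrec]
      split
      · exact hΔub _ (ih ω)
      · have := ih ω; omega
  -- 0 and m are absorbing
  have habs : ∀ n ω, (r n ω = 0 ∨ r n ω = m) → ∀ j, n ≤ j → r j ω = r n ω := by
    intro n ω h j hj
    induction j, hj using Nat.le_induction with
    | base => rfl
    | succ j hj ih =>
      rw [hrec, ih]
      rcases h with h0 | h0 <;> rw [h0] <;> simp [hΔ0, hΔm]
  -- the σ-algebra generated by the first n coins
  set 𝒢 : ℕ → MeasurableSpace Ω :=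
    fun n => ⨆ i ∈ Set.Iio n, MeasurableSpace.comap (B i) inferInstance with h𝒢
  have hG_le : ∀ n, 𝒢 n ≤ (inferInstance : MeasurableSpace Ω) := by
    intro n
    exact iSup₂_le fun i _ => (hBmeas i).comap_le
  have hG_mono : ∀ {a b : ℕ}, a ≤ b → 𝒢 a ≤ 𝒢 b := by
    intro a b hab
    exact biSup_mono fun i hi => lt_of_lt_of_le hi hab
  have hcomap_le : ∀ i n, i < n → MeasurableSpace.comap (B i) inferInstance ≤ 𝒢 n :=
    fun i n hin => le_biSup (fun i => MeasurableSpace.comap (B i) inferInstance) hin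
  have hBG : ∀ n, Measurable[𝒢 (n + 1)] (B n) :=
    fun n => Measurable.of_comap_le (hcomap_le n (n + 1) (Nat.lt_succ_self n))
  have hrG : ∀ n, Measurable[𝒢 n] (r n) := by
    intro n
    induction n with
    | zero =>
      have : r 0 = fun _ => 1 := funext hr0
      rw [this]; exact measurable_const
    | succ n ih =>
      have h1 : r (n + 1) = fun ω =>
          if B n ω then r n ω + Δ (r n ω) else r n ω - Δ (r n ω) := funext (hrec n)
      rw [h1]
      have hrn : Measurable[𝒢 (n + 1)] (r n) := ih.mono (hG_mono (Nat.le_succ n)) le_rfl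
      exact Measurable.ite ((hBG n) (measurableSet_singleton true))
        ((measurable_from_top (f := fun x : ℕ => x + Δ x)).comp hrn)
        ((measurable_from_top (f := fun x : ℕ => x - Δ x)).comp hrn)
  have hrGR : ∀ n, Measurable[𝒢 n] (fun ω => (r n ω : ℝ)) :=
    fun n => (measurable_from_top (f := fun x : ℕ => (x : ℝ))).comp (hrG n)
  set F := Filtration.natural (fun j ω => ((r j ω : ℝ))) hrmeas with hF
  have hF_le_G : ∀ n, F n ≤ 𝒢 n := by
    intro n
    refine iSup₂_le fun j hj => ?_
    exact Measurable.comap_le ((hrGR j).mono (hG_mono hj) le_rfl)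
  -- integrability of bounded functions
  have hint : ∀ (C : ℝ) (f : Ω → ℝ), AEStronglyMeasurable f ℙ → (∀ ω, |f ω| ≤ C) →
      Integrable f ℙ := by
    intro C f hf hb
    exact ⟨hf, HasFiniteIntegral.of_bounded (C := C)
      (ae_of_all _ (by simpa [Real.norm_eq_abs] using hb))⟩
  have hrint : ∀ j, Integrable (fun ω => (r j ω : ℝ)) ℙ := by
    intro j
    refine hint m _ (hrmeas j).aestronglyMeasurable fun ω => ?_
    rw [abs_of_nonneg (by positivity)]
    exact_mod_cast hrle j ω
  -- the martingale property
  have hadp : StronglyAdapted F (fun j ω => ((r j ω : ℝ))) := Filtration.stronglyAdapted_natural hrmeas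
  have hmart : Martingale (fun j ω => (r j ω : ℝ)) F ℙ := by
    refine martingale_nat hadp hrint fun i => ?_
    set ψ : Ω → ℝ := fun ω => if B i ω then 1 else -1 with hψdef
    set D : Ω → ℝ := fun ω => (Δ (r i ω) : ℝ) with hDdef
    have hdec : (fun ω => (r (i + 1) ω : ℝ)) = (fun ω => (r i ω : ℝ)) + D * ψ := by
      funext ω
      simp only [Pi.add_apply, Pi.mul_apply, hψdef, hDdef, hrec]
      split
      · push_cast; ring
      · rw [Nat.cast_sub (hΔself _ (hrle i ω))]; ring
    have hψmeas : Measurable ψ := by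
      exact Measurable.ite ((hBmeas i) (measurableSet_singleton true))
        measurable_const measurable_const
    have hψint : Integrable ψ ℙ := by
      refine hint 1 ψ hψmeas.aestronglyMeasurable fun ω => ?_
      simp only [hψdef]
      split <;> simp
    have hD_sm : StronglyMeasurable[F i] D := by
      have h1 : Measurable[F i] (fun ω => (r i ω : ℝ)) := (hadp i).measurable
      have h2 : Measurable (fun x : ℝ => (Δ ⌊x⌋₊ : ℝ)) :=
        (measurable_from_top (f := fun n : ℕ => (Δ n : ℝ))).comp Nat.measurable_floor
      have hDeq : D = (fun x : ℝ => (Δ ⌊x⌋₊ : ℝ)) ∘ (fun ω => (r i ω : ℝ)) := by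
        funext ω; simp [hDdef, Function.comp, Nat.floor_natCast]
      rw [hDeq]
      exact (h2.comp h1).stronglyMeasurable
    have hDψint : Integrable (D * ψ) ℙ := by
      refine hint m _ (((hD_sm.mono (F.le i)).measurable.mul hψmeas).aestronglyMeasurable)
        fun ω => ?_
      simp only [Pi.mul_apply, abs_mul, hψdef, hDdef]
      have h1 : |(Δ (r i ω) : ℝ)| ≤ (m : ℝ) := by
        rw [abs_of_nonneg (by positivity)]
        exact_mod_cast le_trans (hΔself _ (hrle i ω)) (hrle i ω)
      have h2 : |if B i ω = true then (1 : ℝ) else -1| ≤ 1 := by split <;> simp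
      calc |(Δ (r i ω) : ℝ)| * |if B i ω = true then (1 : ℝ) else -1|
          ≤ (m : ℝ) * 1 := mul_le_mul h1 h2 (abs_nonneg _) (by positivity)
        _ = m := mul_one _
    haveI : SigmaFinite (Measure.trim ℙ (F.le i)) := inferInstance
    -- conditional expectation of ψ is zero
    have hψ_sm : StronglyMeasurable[MeasurableSpace.comap (B i) inferInstance] ψ := by
      have hBm : Measurable[MeasurableSpace.comap (B i) inferInstance] (B i) :=
        Measurable.of_comap_le le_rfl
      exact ((measurable_from_top
        (f := fun b : Bool => if b then (1 : ℝ) else -1)).comp hBm).stronglyMeasurable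
    have hindepF : Indep (MeasurableSpace.comap (B i) inferInstance) (F i) ℙ := by
      have h1 := indep_iSup_of_disjoint (m := fun k => MeasurableSpace.comap (B k) inferInstance)
        (fun k => (hBmeas k).comap_le) hBindep.iIndep
        (S := ({i} : Set ℕ)) (T := Set.Iio i)
        (by simp [Set.disjoint_left])
      rw [iSup_singleton] at h1
      exact indep_of_indep_of_le_right h1 (hF_le_G i)
    have hψ_integral : ∫ ω, ψ ω ∂ℙ = 0 := by
      have hs : MeasurableSet {ω | B i ω = true} := (hBmeas i) (measurableSet_singleton true)
      have hψeq : ψ = fun ω =>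
          Set.indicator {ω | B i ω = true} (fun _ => (2 : ℝ)) ω - 1 := by
        funext ω
        by_cases h : B i ω = true <;>
          simp [hψdef, h, Set.indicator_of_mem, Set.indicator_of_notMem] <;> norm_num
      rw [hψeq]
      rw [integral_sub ((integrable_const (2 : ℝ)).indicator hs) (integrable_const 1)]
      rw [integral_indicator_const _ hs, integral_const, measureReal_def, hBfair i]
      simp [ENNReal.toReal_div]
    have hcondψ : ℙ[ψ | F i] =ᵐ[ℙ] fun _ => 0 := by
      have := condExp_indep_eq (μ := ℙ) ((hBmeas i).comap_le) (F.le i) hψ_sm hindepF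
      rw [hψ_integral] at this
      exact this
    -- put things together
    have h1 : ℙ[fun ω => (r (i + 1) ω : ℝ) | F i]
        =ᵐ[ℙ] ℙ[fun ω => (r i ω : ℝ) | F i] + ℙ[D * ψ | F i] := by
      rw [hdec]; exact condExp_add (hrint i) hDψint _
    have h2 : ℙ[fun ω => (r i ω : ℝ) | F i] = fun ω => (r i ω : ℝ) :=
      condExp_of_stronglyMeasurable (F.le i) (hadp i) (hrint i)
    have h3 : ℙ[D * ψ | F i] =ᵐ[ℙ] fun _ => 0 := by
      have h4 := condExp_mul_of_stronglyMeasurable_left hD_sm hDψint hψint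
      refine h4.trans ?_
      filter_upwards [hcondψ] with ω hω
      simp [hω]
    have hfinal : ℙ[fun ω => (r (i + 1) ω : ℝ) | F i] =ᵐ[ℙ] fun ω => (r i ω : ℝ) :=
      calc ℙ[fun ω => (r (i + 1) ω : ℝ) | F i]
        =ᵐ[ℙ] ℙ[fun ω => (r i ω : ℝ) | F i] + ℙ[D * ψ | F i] := h1
      _ =ᵐ[ℙ] (fun ω => (r i ω : ℝ)) + (fun _ => 0) := by
          rw [h2]; exact Filter.EventuallyEq.add (by rfl) h3
      _ = fun ω => (r i ω : ℝ) := by funext ω; simp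
    exact hfinal.symm
  -- block events: all coins false on the N-th block of length m
  set E : ℕ → Set Ω :=
    fun N => ⋂ k ∈ Finset.Ico (N * m) (N * m + m), {ω | B k ω = false} with hE
  have hEk_measG : ∀ k, MeasurableSet[MeasurableSpace.comap (B k) inferInstance]
      {ω | B k ω = false} := fun k => ⟨{false}, trivial, rfl⟩
  have hEk_meas : ∀ k, MeasurableSet {ω | B k ω = false} :=
    fun k => (hBmeas k) (measurableSet_singleton false)
  have hE_meas : ∀ N, MeasurableSet (E N) := fun N =>
    MeasurableSet.iInter fun k => MeasurableSet.iInter fun _ => hEk_meas k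
  have hBfalse : ∀ k, ℙ {ω | B k ω = false} = 1 / 2 := by
    intro k
    have hcompl : {ω | B k ω = false} = {ω | B k ω = true}ᶜ := by
      ext ω; simp
    have hs : MeasurableSet {ω | B k ω = true} := (hBmeas k) (measurableSet_singleton true)
    rw [hcompl, prob_compl_eq_one_sub hs, hBfair k, ENNReal.sub_half ENNReal.one_ne_top]
  have hE_prob : ∀ N, ℙ (E N) = (1 / 2) ^ m := by
    intro N
    rw [hE]
    rw [hBindep.iIndep.meas_biInter (fun k _ => hEk_measG k)]
    rw [Finset.prod_congr rfl fun k _ => hBfalse k, Finset.prod_const, Nat.card_Ico]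
    congr 1
    omega
  have hE_measG : ∀ N, MeasurableSet[⨆ k ∈ Set.Ici (N * m),
      MeasurableSpace.comap (B k) inferInstance] (E N) := by
    intro N
    refine MeasurableSet.iInter fun k => MeasurableSet.iInter fun hk => ?_
    have hk' : N * m ≤ k := (Finset.mem_Ico.mp hk).1
    exact le_biSup (fun k => MeasurableSpace.comap (B k) inferInstance) hk' _ (hEk_measG k)
  have hSE_indep : ∀ N (s t : Set Ω), MeasurableSet[𝒢 (N * m)] s →
      MeasurableSet[⨆ k ∈ Set.Ici (N * m), MeasurableSpace.comap (B k) inferInstance] t →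
      ℙ (s ∩ t) = ℙ s * ℙ t := by
    intro N s t hs ht
    have h1 := indep_iSup_of_disjoint
      (m := fun k => MeasurableSpace.comap (B k) inferInstance)
      (fun k => (hBmeas k).comap_le) hBindep.iIndep
      (S := Set.Iio (N * m)) (T := Set.Ici (N * m)) (Set.Iio_disjoint_Ici le_rfl)
    exact (Indep.indepSet_of_measurableSet h1 hs ht).measure_inter_eq_mul
  -- a run of m tails absorbs the chain
  have hdown : ∀ N ω, (∀ k, N * m ≤ k → k < N * m + m → B k ω = false) →
      r (N * m + m) ω = 0 ∨ r (N * m + m) ω = m := by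
    intro N ω hB
    have key : ∀ t, t ≤ m → r (N * m + t) ω = m ∨ r (N * m + t) ω = 0 ∨
        r (N * m + t) ω + t ≤ r (N * m) ω := by
      intro t
      induction t with
      | zero => intro _; right; right; simp
      | succ t ih =>
        intro ht
        have ht' : t ≤ m := by omega
        have hBf : B (N * m + t) ω = false := hB _ (Nat.le_add_right _ _) (by omega)
        have hstep : r (N * m + (t + 1)) ω = r (N * m + t) ω - Δ (r (N * m + t) ω) := by
          have h5 := hrec (N * m + t) ω
          rw [hBf] at h5
          rw [← Nat.add_assoc]
          simpa using h5
        rcases ih ht' with h | h | h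
        · left; rw [h, hΔm] at hstep; omega
        · right; left; rw [h, hΔ0] at hstep; omega
        · by_cases h0 : r (N * m + t) ω = 0
          · right; left; rw [h0, hΔ0] at hstep; omega
          · by_cases hmm : r (N * m + t) ω = m
            · left; rw [hmm, hΔm] at hstep; omega
            · right; right
              have h1 : 1 ≤ Δ (r (N * m + t) ω) :=
                hΔpos _ (Nat.pos_of_ne_zero h0) (lt_of_le_of_ne (hrle _ ω) hmm)
              have h2 : Δ (r (N * m + t) ω) ≤ r (N * m + t) ω := hΔself _ (hrle _ ω)
              rw [hstep]; omega
    rcases key m le_rfl with h | h | h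
    · right; exact h
    · left; exact h
    · left; have := hrle (N * m) ω; omega
  -- the non-absorbed events
  set S : ℕ → Set Ω := fun N => {ω | r (N * m) ω ≠ 0 ∧ r (N * m) ω ≠ m} with hSdef
  have hS_measG : ∀ N, MeasurableSet[𝒢 (N * m)] (S N) := by
    intro N
    have h1 : S N = r (N * m) ⁻¹' {x | x ≠ 0 ∧ x ≠ m} := rfl
    rw [h1]; exact hrG (N * m) trivial
  have hS_subset : ∀ N, S (N + 1) ⊆ S N ∩ (E N)ᶜ := by
    intro N ω hω
    have hω' : r ((N + 1) * m) ω ≠ 0 ∧ r ((N + 1) * m) ω ≠ m := hω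
    constructor
    · by_contra h
      have habs' : r (N * m) ω = 0 ∨ r (N * m) ω = m := by
        simp only [hSdef, Set.mem_setOf_eq, not_and_or, not_not] at h; tauto
      have h6 := habs (N * m) ω habs' ((N + 1) * m) (by nlinarith)
      rw [h6] at hω'
      tauto
    · intro hE'
      have hBf : ∀ k, N * m ≤ k → k < N * m + m → B k ω = false := by
        intro k h1 h2
        have h7 : ω ∈ ⋂ k ∈ Finset.Ico (N * m) (N * m + m), {ω | B k ω = false} := hE'
        simp only [Set.mem_iInter] at h7
        exact h7 k (Finset.mem_Ico.mpr ⟨h1, h2⟩)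
      have h8 := hdown N ω hBf
      have h9 : (N + 1) * m = N * m + m := by ring
      rw [h9] at hω'
      tauto
  set q : ℝ≥0∞ := 1 - (1 / 2) ^ m with hqdef
  have hEc_prob : ∀ N, ℙ ((E N)ᶜ) = q := fun N => by
    rw [prob_compl_eq_one_sub (hE_meas N), hE_prob N]
  have hS_decay : ∀ N, ℙ (S N) ≤ q ^ N := by
    intro N
    induction N with
    | zero => simpa using prob_le_one
    | succ N ih =>
      calc ℙ (S (N + 1)) ≤ ℙ (S N ∩ (E N)ᶜ) := measure_mono (hS_subset N)
        _ = ℙ (S N) * ℙ ((E N)ᶜ) := hSE_indep N _ _ (hS_measG N) ((hE_measG N).compl)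
        _ ≤ q ^ N * q := mul_le_mul' ih (le_of_eq (hEc_prob N))
        _ = q ^ (N + 1) := (pow_succ q N).symm
  have hq_lt : q < 1 := by
    rw [hqdef]
    refine ENNReal.sub_lt_self ENNReal.one_ne_top one_ne_zero ?_
    refine pow_ne_zero m ?_
    simp
  set T := ⋂ N, S N with hT
  have hT_zero : ℙ T = 0 := by
    refine le_antisymm ?_ zero_le
    have h1 : Filter.Tendsto (fun N => q ^ N) Filter.atTop (nhds 0) :=
      ENNReal.tendsto_pow_atTop_nhds_zero_of_lt_one hq_lt
    refine ge_of_tendsto h1 (Filter.Eventually.of_forall fun N => ?_)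
    exact le_trans (measure_mono (Set.iInter_subset _ N)) (hS_decay N)
  have hT_meas : MeasurableSet T :=
    MeasurableSet.iInter fun N => (hG_le _) _ (hS_measG N)
  -- Part 3 : absorption almost surely
  have hG3 : Tᶜ ⊆ {ω | ∃ J, ∀ j, J ≤ j → r j ω = r J ω ∧ (r J ω = 0 ∨ r J ω = m)} := by
    intro ω hω
    simp only [hT, Set.mem_compl_iff, Set.mem_iInter, not_forall] at hω
    obtain ⟨N, hN⟩ := hω
    have habs' : r (N * m) ω = 0 ∨ r (N * m) ω = m := by
      simp only [hSdef, Set.mem_setOf_eq, not_and_or, not_not] at hN; tauto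
    exact ⟨N * m, fun j hj => ⟨habs _ ω habs' j hj, habs'⟩⟩
  have hpart3 : ℙ {ω | ∃ J, ∀ j, J ≤ j → r j ω = r J ω ∧ (r J ω = 0 ∨ r J ω = m)} = 1 := by
    refine le_antisymm prob_le_one ?_
    calc (1 : ℝ≥0∞) = ℙ Tᶜ := by
          rw [prob_compl_eq_one_sub hT_meas, hT_zero, tsub_zero]
      _ ≤ _ := measure_mono hG3
  -- Part 4 : probability of absorbing at m
  set A := {ω | ∃ J, r J ω = m} with hA
  have hA_meas : MeasurableSet A := by
    have h1 : A = ⋃ J, (fun ω => (r J ω : ℝ)) ⁻¹' {(m : ℝ)} := by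
      ext ω
      simp only [hA, Set.mem_setOf_eq, Set.mem_iUnion, Set.mem_preimage,
        Set.mem_singleton_iff, Nat.cast_inj]
    rw [h1]
    exact MeasurableSet.iUnion fun J => (hrmeas J).measurable (measurableSet_singleton _)
  set g : Ω → ℝ := Set.indicator A (fun _ => (m : ℝ)) with hg
  have hconv : ∀ ω, ω ∉ T → Filter.Tendsto (fun j => (r j ω : ℝ)) Filter.atTop (nhds (g ω)) := by
    intro ω hω
    obtain ⟨N, hN⟩ : ∃ N, ¬(r (N * m) ω ≠ 0 ∧ r (N * m) ω ≠ m) := by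
      simpa [hT, hSdef, Set.mem_iInter] using hω
    have habs' : r (N * m) ω = 0 ∨ r (N * m) ω = m := by
      rw [not_and_or, not_not, not_not] at hN; tauto
    have hconst : ∀ j, N * m ≤ j → r j ω = r (N * m) ω := habs _ ω habs'
    rcases habs' with h0 | h0
    · have hAc : ω ∉ A := by
        rintro ⟨J, hJ⟩
        rcases le_total (N * m) J with h | h
        · rw [hconst J h, h0] at hJ; omega
        · have h2 := habs J ω (Or.inr hJ) (N * m) h
          rw [h2, hJ] at h0
          omega
      have hgω : g ω = 0 := Set.indicator_of_notMem hAc _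
      rw [hgω]
      refine tendsto_atTop_of_eventually_const (i₀ := N * m) fun j hj => ?_
      rw [hconst j hj, h0]; simp
    · have hAm : ω ∈ A := ⟨N * m, h0⟩
      have hgω : g ω = m := Set.indicator_of_mem hAm _
      rw [hgω]
      refine tendsto_atTop_of_eventually_const (i₀ := N * m) fun j hj => ?_
      rw [hconst j hj, h0]
  have hae : ∀ᵐ ω ∂ℙ, Filter.Tendsto (fun j => (r j ω : ℝ)) Filter.atTop (nhds (g ω)) := by
    rw [ae_iff]
    refine measure_mono_null (fun ω hω => ?_) hT_zero
    by_contra h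
    exact hω (hconv ω h)
  have hDCT : Filter.Tendsto (fun j => ∫ ω, (r j ω : ℝ) ∂ℙ) Filter.atTop
      (nhds (∫ ω, g ω ∂ℙ)) := by
    refine tendsto_integral_of_dominated_convergence (fun _ => (m : ℝ))
      (fun j => (hrmeas j).aestronglyMeasurable) (integrable_const _)
      (fun j => ae_of_all _ fun ω => ?_) hae
    rw [Real.norm_eq_abs, abs_of_nonneg (by positivity)]
    show ((r j ω : ℝ)) ≤ (m : ℝ)
    exact_mod_cast hrle j ω
  have hconst_int : ∀ j, ∫ ω, (r j ω : ℝ) ∂ℙ = 1 := by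
    intro j
    haveI : SigmaFinite (Measure.trim ℙ (F.le 0)) := inferInstance
    have h1 := hmart.condExp_ae_eq (Nat.zero_le j)
    have h2 : ∫ ω, (r j ω : ℝ) ∂ℙ = ∫ ω, (r 0 ω : ℝ) ∂ℙ :=
      calc ∫ ω, (r j ω : ℝ) ∂ℙ
          = ∫ ω, (ℙ[fun ω => (r j ω : ℝ)|F 0]) ω ∂ℙ := (integral_condExp (F.le 0)).symm
        _ = ∫ ω, (r 0 ω : ℝ) ∂ℙ := integral_congr_ae h1
    rw [h2]
    simp [hr0]
  have hint_g : ∫ ω, g ω ∂ℙ = 1 := by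
    have h3 := hDCT
    simp_rw [hconst_int] at h3
    exact (tendsto_nhds_unique h3 tendsto_const_nhds)
  have hg_val : ∫ ω, g ω ∂ℙ = (ℙ A).toReal * m := by
    rw [hg, integral_indicator_const _ hA_meas, smul_eq_mul, measureReal_def]
  have hm' : (m : ℝ) ≠ 0 := Nat.cast_ne_zero.mpr (by omega)
  have hPA : (ℙ A).toReal = 1 / m := by
    rw [hg_val] at hint_g
    field_simp
    linarith
  have hpart4 : ℙ A = 1 / (m : ℝ≥0∞) := by
    have hfin : ℙ A ≠ ⊤ := measure_ne_top _ _
    have hfin2 : 1 / (m : ℝ≥0∞) ≠ ⊤ := by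
      rw [one_div]
      exact ENNReal.inv_ne_top.mpr (Nat.cast_ne_zero.mpr (by omega))
    refine (ENNReal.toReal_eq_toReal_iff' hfin hfin2).mp ?_
    rw [hPA, one_div, one_div, ENNReal.toReal_inv, ENNReal.toReal_natCast]
  exact ⟨hrle, hmart, hpart3, hpart4⟩
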